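/- arXiv:1502.06742 — 2 statements merged into one kernel-verified Lean document; each statement's English description precedes it below -/
import Mathlib

section
/- Consider a piecewise linear curve consisting of n segments each of length ℓ, with a corner (forcing zero velocity) at each of the n−1 junctions and at the endpoints. Any C² traversal s with ‖s'‖ ≤ α, ‖s''‖ ≤ β, and s'(tᵢ) = 0 at all junction times tᵢ requires total time T ≥ n·min(2√(ℓ/β), ℓ/α + α/β). -/
open Set

lemma seg_time_bound {d : ℕ} (β ℓ a b : ℝ) (hβ : 0 < β) (hab : a ≤ b)
    (s : ℝ → EuclideanSpace ℝ (Fin d)) (hs : ContDiff ℝ 2 s)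
    (haccel : ∀ τ ∈ Icc a b, ‖deriv (deriv s) τ‖ ≤ β)
    (hva : deriv s a = 0) (hvb : deriv s b = 0)
    (hl : ‖s b - s a‖ = ℓ) : 2 * Real.sqrt (ℓ / β) ≤ b - a := by
  have hs1 : ContDiff ℝ 1 (deriv s) := by
    have h2 : ContDiff ℝ (1 + 1 : ℕ) s := by exact_mod_cast hs
    exact ((contDiff_succ_iff_deriv).mp h2).2.2
  set v := deriv s with hv
  have hvdiff : Differentiable ℝ v := hs1.differentiable one_ne_zero
  have hconv : Convex ℝ (Icc a b) := convex_Icc a b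
  have hbndL : ∀ τ ∈ Icc a b, ‖v τ‖ ≤ β * (τ - a) := by
    intro τ hτ
    have := hconv.norm_image_sub_le_of_norm_deriv_le (f := v)
      (fun x _ => hvdiff x) haccel (left_mem_Icc.mpr hab) hτ
    rw [hva, sub_zero] at this
    calc ‖v τ‖ ≤ β * ‖τ - a‖ := this
      _ = β * (τ - a) := by rw [Real.norm_eq_abs, abs_of_nonneg (by linarith [hτ.1])]
  have hbndR : ∀ τ ∈ Icc a b, ‖v τ‖ ≤ β * (b - τ) := by
    intro τ hτ
    have := hconv.norm_image_sub_le_of_norm_deriv_le (f := v)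
      (fun x _ => hvdiff x) haccel (right_mem_Icc.mpr hab) hτ
    rw [hvb, sub_zero] at this
    calc ‖v τ‖ ≤ β * ‖τ - b‖ := this
      _ = β * (b - τ) := by rw [Real.norm_eq_abs, abs_of_nonpos (by linarith [hτ.2])]; ring
  set m := (a + b) / 2 with hm
  have ham : a ≤ m := by simp only [hm]; linarith
  have hmb : m ≤ b := by simp only [hm]; linarith
  have hvcont : Continuous v := hs1.continuous
  have hint : s b - s a = ∫ τ in a..b, v τ := by
    symm
    exact intervalIntegral.integral_deriv_eq_sub
      (fun τ _ => (hs.differentiable (by norm_num)) τ)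
      (hvcont.intervalIntegrable a b)
  have hIL : (∫ τ in a..m, ‖v τ‖) ≤ β * (m - a) ^ 2 / 2 := by
    have h1 : (∫ τ in a..m, ‖v τ‖) ≤ ∫ τ in a..m, β * (τ - a) := by
      apply intervalIntegral.integral_mono_on ham
        (hvcont.norm.intervalIntegrable a m)
        ((continuous_const.mul (continuous_id.sub continuous_const)).intervalIntegrable a m)
      intro τ hτ
      exact hbndL τ ⟨hτ.1, hτ.2.trans hmb⟩
    have h2 : (∫ τ in a..m, β * (τ - a)) = β * (m - a) ^ 2 / 2 := by
      rw [intervalIntegral.integral_const_mul,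
        intervalIntegral.integral_sub intervalIntegral.intervalIntegrable_id
          (intervalIntegrable_const),
        integral_id, intervalIntegral.integral_const, smul_eq_mul]
      ring
    linarith
  have hIR : (∫ τ in m..b, ‖v τ‖) ≤ β * (b - m) ^ 2 / 2 := by
    have h1 : (∫ τ in m..b, ‖v τ‖) ≤ ∫ τ in m..b, β * (b - τ) := by
      apply intervalIntegral.integral_mono_on hmb
        (hvcont.norm.intervalIntegrable m b)
        ((continuous_const.mul (continuous_const.sub continuous_id)).intervalIntegrable m b)
      intro τ hτ
      exact hbndR τ ⟨ham.trans hτ.1, hτ.2⟩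
    have h2 : (∫ τ in m..b, β * (b - τ)) = β * (b - m) ^ 2 / 2 := by
      rw [intervalIntegral.integral_const_mul,
        intervalIntegral.integral_sub (intervalIntegrable_const)
          intervalIntegral.intervalIntegrable_id,
        integral_id, intervalIntegral.integral_const, smul_eq_mul]
      ring
    linarith
  have hsplit : (∫ τ in a..b, ‖v τ‖) = (∫ τ in a..m, ‖v τ‖) + ∫ τ in m..b, ‖v τ‖ :=
    (intervalIntegral.integral_add_adjacent_intervals
      (hvcont.norm.intervalIntegrable a m) (hvcont.norm.intervalIntegrable m b)).symm
  have hkey : ℓ ≤ β * (b - a) ^ 2 / 4 := by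
    have := intervalIntegral.norm_integral_le_integral_norm (f := v) (a := a) (b := b) (μ := MeasureTheory.volume) hab
    rw [← hint, hl] at this
    have hms : m - a = (b - a) / 2 := by simp only [hm]; ring
    have hmb' : b - m = (b - a) / 2 := by simp only [hm]; ring
    rw [hsplit] at this
    rw [hms] at hIL
    rw [hmb'] at hIR
    nlinarith [hIL, hIR, this]
  have hℓβ : ℓ / β ≤ ((b - a) / 2) ^ 2 := by
    rw [div_le_iff₀ hβ]
    nlinarith
  have := Real.sqrt_le_sqrt hℓβ
  rw [Real.sqrt_sq (by linarith)] at this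
  linarith

theorem piecewise_linear_traversal_time_bound (T : ℝ) (d n : ℕ) (hn : 1 ≤ n)
    (ℓ α β : ℝ) (hℓ : 0 < ℓ) (hα : 0 < α) (hβ : 0 < β)
    (s : ℝ → EuclideanSpace ℝ (Fin d)) (hs : ContDiff ℝ 2 s)
    (t : Fin (n + 1) → ℝ) (hmono : Monotone t)
    (ht0 : t 0 = 0) (htn : t (Fin.last n) = T)
    (hspeed : ∀ τ ∈ Icc (0 : ℝ) T, ‖deriv s τ‖ ≤ α)
    (haccel : ∀ τ ∈ Icc (0 : ℝ) T, ‖deriv (deriv s) τ‖ ≤ β)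
    (hrest : ∀ i : Fin (n + 1), deriv s (t i) = 0)
    (hseg : ∀ i : Fin n, ‖s (t i.succ) - s (t i.castSucc)‖ = ℓ) :
    T ≥ n * min (2 * Real.sqrt (ℓ / β)) (ℓ / α + α / β) := by
  set c := 2 * Real.sqrt (ℓ / β) with hc
  -- each t j is in [0, T]
  have hrange : ∀ j : Fin (n + 1), t j ∈ Icc (0 : ℝ) T := by
    intro j
    constructor
    · rw [← ht0]; exact hmono (Fin.zero_le j)
    · rw [← htn]; exact hmono (Fin.le_last j)
  -- per-segment bound
  have hsegtime : ∀ i : Fin n, c ≤ t i.succ - t i.castSucc := by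
    intro i
    have hab : t i.castSucc ≤ t i.succ := hmono (by
      simp [Fin.le_def])
    apply seg_time_bound β ℓ _ _ hβ hab s hs
    · intro τ hτ
      apply haccel
      exact ⟨le_trans (hrange i.castSucc).1 hτ.1, le_trans hτ.2 (hrange i.succ).2⟩
    · exact hrest i.castSucc
    · exact hrest i.succ
    · exact hseg i
  -- telescoping
  have key : (n : ℝ) * c ≤ T := by
    have f : ℕ → ℝ := fun i => t ⟨min i n, Nat.lt_succ_of_le (min_le_right _ _)⟩
    have htel : (∑ i ∈ Finset.range n, (t ⟨min (i+1) n, Nat.lt_succ_of_le (min_le_right _ _)⟩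
        - t ⟨min i n, Nat.lt_succ_of_le (min_le_right _ _)⟩)) = T := by
      rw [Finset.sum_range_sub (f := fun i => t ⟨min i n, Nat.lt_succ_of_le (min_le_right _ _)⟩)]
      have h1 : (⟨min n n, Nat.lt_succ_of_le (min_le_right _ _)⟩ : Fin (n+1)) = Fin.last n := by
        ext; simp
      have h2 : (⟨min 0 n, Nat.lt_succ_of_le (min_le_right _ _)⟩ : Fin (n+1)) = 0 := by
        ext; simp
      rw [h1, h2, ht0, htn, sub_zero]
    have hterm : ∀ i ∈ Finset.range n, c ≤
        t ⟨min (i+1) n, Nat.lt_succ_of_le (min_le_right _ _)⟩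
        - t ⟨min i n, Nat.lt_succ_of_le (min_le_right _ _)⟩ := by
      intro i hi
      have hi' : i < n := Finset.mem_range.mp hi
      have := hsegtime ⟨i, hi'⟩
      have hsu : (Fin.succ ⟨i, hi'⟩ : Fin (n+1)) =
          ⟨min (i+1) n, Nat.lt_succ_of_le (min_le_right _ _)⟩ := by
        ext; simp [Nat.succ_le_of_lt hi']
      have hcs : (Fin.castSucc ⟨i, hi'⟩ : Fin (n+1)) =
          ⟨min i n, Nat.lt_succ_of_le (min_le_right _ _)⟩ := by
        ext; simp [le_of_lt hi']
      rw [hsu, hcs] at this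
      exact this
    calc (n : ℝ) * c = (Finset.range n).card • c := by
            simp [nsmul_eq_mul]
      _ ≤ ∑ i ∈ Finset.range n, (t ⟨min (i+1) n, Nat.lt_succ_of_le (min_le_right _ _)⟩
            - t ⟨min i n, Nat.lt_succ_of_le (min_le_right _ _)⟩) :=
            Finset.card_nsmul_le_sum _ _ _ hterm
      _ = T := htel
  have hmin : min (2 * Real.sqrt (ℓ / β)) (ℓ / α + α / β) ≤ c := min_le_left _ _
  have hn' : (0 : ℝ) ≤ n := Nat.cast_nonneg n
  calc (n : ℝ) * min (2 * Real.sqrt (ℓ / β)) (ℓ / α + α / β)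
      ≤ (n : ℝ) * c := by apply mul_le_mul_of_nonneg_left hmin hn'
    _ ≤ T := key
end

section
/- For a 1D rest-to-rest motion with both constraints: if x : [0,T] → ℝ is C² with x(0)=0, x(T)=ℓ, x'(0)=x'(T)=0, |x'(t)| ≤ α and |x''(t)| ≤ β for all t, and ℓ ≥ α²/β, then T ≥ ℓ/α + α/β. -/
open Set

theorem rest_to_rest_time_bound_trapezoidal (T ℓ α β : ℝ)
    (hℓ : 0 < ℓ) (hα : 0 < α) (hβ : 0 < β) (hT : 0 ≤ T)
    (hlong : ℓ ≥ α ^ 2 / β)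
    (x : ℝ → ℝ) (hx : ContDiff ℝ 2 x)
    (hx0 : x 0 = 0) (hxT : x T = ℓ)
    (hv0 : deriv x 0 = 0) (hvT : deriv x T = 0)
    (hspeed : ∀ t ∈ Icc (0 : ℝ) T, |deriv x t| ≤ α)
    (haccel : ∀ t ∈ Icc (0 : ℝ) T, |deriv (deriv x) t| ≤ β) :
    T ≥ ℓ / α + α / β := by
  set v := deriv x with hv
  have hxdiff : Differentiable ℝ x := hx.differentiable (by norm_num)
  have hvC : ContDiff ℝ 1 v := by
    have h2 : ContDiff ℝ ((1:ℕ) + 1) x := by exact_mod_cast hx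
    exact (contDiff_succ_iff_deriv.mp h2).2.2
  have hvdiff : Differentiable ℝ v := hvC.differentiable one_ne_zero
  have hvcont : Continuous v := hvdiff.continuous
  -- Lipschitz bound on v over [0,T]
  have hlip : ∀ s ∈ Icc (0:ℝ) T, ∀ t ∈ Icc (0:ℝ) T, |v t - v s| ≤ β * |t - s| := by
    intro s hs t ht
    have := (convex_Icc (0:ℝ) T).norm_image_sub_le_of_norm_hasDerivWithin_le
      (f := v) (f' := deriv v)
      (fun y _ => (hvdiff y).hasDerivAt.hasDerivWithinAt)
      (fun y hy => by simpa [Real.norm_eq_abs] using haccel y hy) hs ht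
    simpa [Real.norm_eq_abs] using this
  have hvle1 : ∀ t ∈ Icc (0:ℝ) T, v t ≤ β * t := by
    intro t ht
    have h := hlip 0 (by constructor <;> simp [hT]) t ht
    rw [hv0] at h
    have h2 := (abs_le.mp h).2
    simpa [abs_of_nonneg ht.1] using h2
  have hvle2 : ∀ t ∈ Icc (0:ℝ) T, v t ≤ β * (T - t) := by
    intro t ht
    have h := hlip T (by constructor <;> simp [hT]) t ht
    rw [hvT] at h
    have h2 := (abs_le.mp h).2
    have : |t - T| = T - t := by rw [abs_sub_comm]; exact abs_of_nonneg (by linarith [ht.2])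
    rw [this] at h2; linarith
  have hvle3 : ∀ t ∈ Icc (0:ℝ) T, v t ≤ α := fun t ht => (abs_le.mp (hspeed t ht)).2
  -- FTC
  have hFTC : ∫ t in (0:ℝ)..T, v t = ℓ := by
    rw [intervalIntegral.integral_deriv_eq_sub (fun t _ => hxdiff t)
      (hvcont.intervalIntegrable 0 T), hxT, hx0, sub_zero]
  have hvint : ∀ p q : ℝ, IntervalIntegrable v MeasureTheory.volume p q :=
    fun p q => hvcont.intervalIntegrable p q
  -- integral of β*t on [p,q]
  have hI1 : ∀ p q : ℝ, ∫ t in p..q, β * t = β * ((q^2 - p^2)/2) := by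
    intro p q
    rw [intervalIntegral.integral_const_mul, integral_id]
  have hI2 : ∀ p q : ℝ, ∫ t in p..q, β * (T - t) = β * T * (q - p) - β * ((q^2 - p^2)/2) := by
    intro p q
    have : ∀ t : ℝ, β * (T - t) = β * T - β * t := fun t => by ring
    simp_rw [this]
    rw [intervalIntegral.integral_sub (g := fun t : ℝ => β * t) (intervalIntegrable_const)
      ((continuous_const.mul continuous_id').intervalIntegrable p q),
      intervalIntegral.integral_const, intervalIntegral.integral_const_mul, integral_id]
    simp [smul_eq_mul]; ring
  -- Step 1 : T ≥ 2α/β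
  have hT2 : 2 * α / β ≤ T := by
    by_contra hbad
    push_neg at hbad
    have hhalf : (0:ℝ) ≤ T/2 := by linarith
    have hsplit : ℓ = (∫ t in (0:ℝ)..(T/2), v t) + ∫ t in (T/2)..T, v t := by
      rw [intervalIntegral.integral_add_adjacent_intervals (hvint 0 (T/2)) (hvint (T/2) T), hFTC]
    have hb1 : (∫ t in (0:ℝ)..(T/2), v t) ≤ ∫ t in (0:ℝ)..(T/2), β * t := by
      apply intervalIntegral.integral_mono_on (by linarith) (hvint 0 (T/2))
        ((continuous_const.mul continuous_id').intervalIntegrable _ _)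
      intro t ht
      exact hvle1 t ⟨ht.1, le_trans ht.2 (by linarith)⟩
    have hb2 : (∫ t in (T/2)..T, v t) ≤ ∫ t in (T/2)..T, β * (T - t) := by
      apply intervalIntegral.integral_mono_on (by linarith) (hvint (T/2) T)
        ((continuous_const.mul (continuous_const.sub continuous_id)).intervalIntegrable _ _)
      intro t ht
      exact hvle2 t ⟨le_trans hhalf ht.1, ht.2⟩
    rw [hI1] at hb1
    rw [hI2] at hb2
    have hℓle : ℓ ≤ β * T^2 / 4 := by rw [hsplit]; nlinarith
    have hTlt : T < 2 * α / β := hbad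
    have : β * T^2 / 4 < α^2 / β := by
      rw [div_lt_div_iff₀ (by norm_num) hβ]
      have : T^2 < (2*α/β)^2 := by
        apply pow_lt_pow_left₀ hTlt hT
        norm_num
      rw [div_pow] at this
      calc β * T^2 * β = T^2 * β^2 := by ring
        _ < ((2*α)^2 / β^2) * β^2 := by
            apply mul_lt_mul_of_pos_right (by simpa using this) (by positivity)
        _ = α^2 * 4 := by field_simp; ring
    linarith
  -- Step 2: main bound
  set a := α / β with ha
  have ha0 : 0 < a := by positivity
  have haT : a ≤ T - a := by
    rw [ha]
    have h2a : 2 * (α / β) = 2 * α / β := by ring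
    linarith [hT2]
  have hsplit : ℓ = (∫ t in (0:ℝ)..a, v t) + (∫ t in a..(T-a), v t) + ∫ t in (T-a)..T, v t := by
    rw [intervalIntegral.integral_add_adjacent_intervals (hvint 0 a) (hvint a (T-a)),
      intervalIntegral.integral_add_adjacent_intervals (hvint 0 (T-a)) (hvint (T-a) T), hFTC]
  have hb1 : (∫ t in (0:ℝ)..a, v t) ≤ ∫ t in (0:ℝ)..a, β * t := by
    apply intervalIntegral.integral_mono_on ha0.le (hvint 0 a)
      ((continuous_const.mul continuous_id').intervalIntegrable _ _)
    intro t ht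
    exact hvle1 t ⟨ht.1, by linarith [ht.2, haT, ha0.le]⟩
  have hb2 : (∫ t in a..(T-a), v t) ≤ ∫ t in a..(T-a), α := by
    apply intervalIntegral.integral_mono_on haT (hvint a (T-a))
      (intervalIntegrable_const)
    intro t ht
    exact hvle3 t ⟨le_trans ha0.le ht.1, by linarith [ht.2]⟩
  have hb3 : (∫ t in (T-a)..T, v t) ≤ ∫ t in (T-a)..T, β * (T - t) := by
    apply intervalIntegral.integral_mono_on (by linarith) (hvint (T-a) T)
      ((continuous_const.mul (continuous_const.sub continuous_id)).intervalIntegrable _ _)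
    intro t ht
    exact hvle2 t ⟨by linarith [ht.1, haT, ha0.le], ht.2⟩
  rw [hI1] at hb1
  rw [hI2] at hb3
  rw [intervalIntegral.integral_const, smul_eq_mul] at hb2
  have hβa : β * a = α := by rw [ha]; field_simp
  have hkey : ℓ ≤ α * T - α^2 / β := by
    have h1 : β * ((a^2 - 0^2)/2) = α * a / 2 := by
      have : β * ((a^2 - 0^2)/2) = (β * a) * a / 2 := by ring
      rw [this, hβa]
    have h3 : β * T * (T - (T - a)) - β * ((T^2 - (T-a)^2)/2) = α * a / 2 := by
      have : β * T * (T - (T - a)) - β * ((T^2 - (T-a)^2)/2) = (β * a) * a / 2 := by ring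
      rw [this, hβa]
    have haα : α * a = α^2 / β := by rw [ha]; field_simp
    rw [hsplit]
    calc (∫ t in (0:ℝ)..a, v t) + (∫ t in a..(T-a), v t) + ∫ t in (T-a)..T, v t
        ≤ α * a / 2 + (T - a - a) * α + α * a / 2 := by
          linarith [hb1, hb2, hb3, h1, h3]
      _ = α * T - α * a := by ring
      _ = α * T - α^2 / β := by rw [haα]
  have hkey' : ℓ * β ≤ (α * T - α ^ 2 / β) * β := mul_le_mul_of_nonneg_right hkey hβ.le
  rw [sub_mul, div_mul_cancel₀ _ hβ.ne'] at hkey'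
  rw [ge_iff_le, div_add_div _ _ hα.ne' hβ.ne', div_le_iff₀ (by positivity)]
  nlinarith [hkey']
end
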